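/- For all ℓ,s ∈ ℂ, the subspaces 𝔡̃_{ℓ,s,<0} = t⁻¹𝔡[t⁻¹] ⊕ ℂc and 𝔡̃_{ℓ,s,≥0} = ℂ∂ ⊕ 𝔡[t] are Lie subalgebras of 𝔡̃_{ℓ,s}, the vector space 𝔡̃_{ℓ,s} is their internal direct sum, and the bilinear form β_{ℓ−s} vanishes identically on each of them; i.e. they are complementary Lagrangian Lie subalgebras of (𝔡̃_{ℓ,s}, β_{ℓ−s}). -/

import Mathlib

open scoped TensorProduct

noncomputable section

variable (L : Type) [LieRing L] [LieAlgebra ℂ L]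

attribute [local instance] LieRing.ofAssociativeRing

/-- The coadjoint action of `L` on its dual space: `(coad L x f) z = -f ⁅x, z⁆`. -/
def coad : L →ₗ[ℂ] Module.Dual ℂ L →ₗ[ℂ] Module.Dual ℂ L :=
  -(Module.Dual.transpose (R := ℂ) ∘ₗ (LieAlgebra.ad ℂ L).toLinearMap)

variable {L}

lemma coad_apply (x : L) (f : Module.Dual ℂ L) (z : L) :
    coad L x f z = -f ⁅x, z⁆ := by
  simp [coad, Module.Dual.transpose_apply]

lemma coad_lie (x y : L) :
    coad L ⁅x, y⁆ = coad L x ∘ₗ coad L y - coad L y ∘ₗ coad L x := by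
  ext f z
  simp only [coad_apply, LinearMap.sub_apply, LinearMap.comp_apply]
  rw [leibniz_lie x y z, map_add]
  ring

variable (L)

/-- The bracket of the cotangent Lie algebra `T*𝔤 = 𝔤 ⋉ 𝔤*`:
`[(x,f),(y,g)] = ([x,y], x•g − y•f)`. -/
def dbkt (a b : L × Module.Dual ℂ L) : L × Module.Dual ℂ L :=
  (⁅a.1, b.1⁆, coad L a.1 b.2 - coad L b.1 a.2)

instance cotLieRing : LieRing (L × Module.Dual ℂ L) :=
  { (inferInstance : AddCommGroup (L × Module.Dual ℂ L)) with
    bracket := dbkt L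
    add_lie := by
      intro a b c
      show dbkt L (a + b) c = dbkt L a c + dbkt L b c
      simp only [dbkt, Prod.fst_add, Prod.snd_add, Prod.mk_add_mk, add_lie, map_add,
        LinearMap.add_apply, Prod.mk.injEq]
      exact ⟨trivial, by abel⟩
    lie_add := by
      intro a b c
      show dbkt L a (b + c) = dbkt L a b + dbkt L a c
      simp only [dbkt, Prod.fst_add, Prod.snd_add, Prod.mk_add_mk, lie_add, map_add,
        LinearMap.add_apply, Prod.mk.injEq]
      exact ⟨trivial, by abel⟩
    lie_self := by
      intro a
      show dbkt L a a = 0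
      simp [dbkt, Prod.ext_iff]
    leibniz_lie := by
      intro a b c
      show dbkt L a (dbkt L b c) = dbkt L (dbkt L a b) c + dbkt L b (dbkt L a c)
      simp only [dbkt, Prod.mk_add_mk, Prod.mk.injEq, coad_lie, map_sub,
        LinearMap.sub_apply, LinearMap.comp_apply]
      exact ⟨leibniz_lie a.1 b.1 c.1, by abel⟩ }

instance cotLieAlgebra : LieAlgebra ℂ (L × Module.Dual ℂ L) :=
  { (inferInstance : Module ℂ (L × Module.Dual ℂ L)) with
    lie_smul := by
      intro t a b
      show dbkt L a (t • b) = t • dbkt L a b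
      simp only [dbkt, Prod.smul_fst, Prod.smul_snd, Prod.smul_mk, lie_smul, map_smul,
        LinearMap.smul_apply, Prod.mk.injEq, smul_sub] }

@[simp] lemma cot_bracket_def (a b : L × Module.Dual ℂ L) :
    ⁅a, b⁆ = (⁅a.1, b.1⁆, coad L a.1 b.2 - coad L b.1 a.2) := rfl

end

noncomputable section LoopModel

/-- The loop algebra `𝔡[t,t⁻¹]` of the cotangent Lie algebra `𝔡 = T*𝔤`, modelled as finitely
supported functions `ℤ → 𝔡` (the value at `n` being the coefficient of `tⁿ`). -/
abbrev LoopD (L : Type) [LieRing L] [LieAlgebra ℂ L] := ℤ →₀ (L × Module.Dual ℂ L)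

variable {L : Type} [LieRing L] [LieAlgebra ℂ L]

/-- The Lie bracket of the loop algebra: `[a⊗tⁿ, b⊗tᵐ] = [a,b]⊗tⁿ⁺ᵐ`. -/
def loopBr (u v : LoopD L) : LoopD L :=
  u.sum fun n a => v.sum fun m b => Finsupp.single (n + m) ⁅a, b⁆

/-- The canonical pairing form `κ₀` on `𝔡`: `κ₀((x,f),(y,g)) = f(y) + g(x)`. -/
def kappa0 (a b : L × Module.Dual ℂ L) : ℂ :=
  a.2 b.1 + b.2 a.1

/-- The form `κ_ℓ = κ₀ + ℓ·κ_𝔤` on `𝔡`, the Killing form of `𝔤` being extended by zero. -/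
def kappaL (ℓ : ℂ) (a b : L × Module.Dual ℂ L) : ℂ :=
  kappa0 a b + ℓ * killingForm ℂ L a.1 b.1

/-- The derivation `∂_ε` of `𝔡[t,t⁻¹]`: `∂_ε((x,f)⊗tⁿ) = n·(0,ψ(x))⊗tⁿ⁻¹`, where
`ψ(x) = κ_𝔤(x,−)`. -/
def depsLoop (u : LoopD L) : LoopD L :=
  u.sum fun n a =>
    Finsupp.single (n - 1) ((n : ℂ) • (((0 : L), killingForm ℂ L a.1) : L × Module.Dual ℂ L))

/-- The derivation `∂_t` of `𝔡[t,t⁻¹]`: `∂_t(a⊗tⁿ) = n·a⊗tⁿ⁻¹`. -/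
def dtLoop (u : LoopD L) : LoopD L :=
  u.sum fun n a => Finsupp.single (n - 1) ((n : ℂ) • a)

/-- `∂_s = ∂_t + s·∂_ε`. -/
def dsLoop (s : ℂ) (u : LoopD L) : LoopD L :=
  dtLoop u + s • depsLoop u

/-- The 2-cocycle `ω_ℓ(a⊗tⁿ, b⊗tᵐ) = n·δ_{n+m,0}·κ_ℓ(a,b)` on `𝔡[t,t⁻¹]`. -/
def omegaL (ℓ : ℂ) (u v : LoopD L) : ℂ :=
  u.sum fun n a => (n : ℂ) * kappaL ℓ a (v (-n))

/-- The bracket of the central extension `𝔡[t,t⁻¹] ⊕ ℂc_ℓ`. -/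
def extBr (ℓ : ℂ) (A B : LoopD L × ℂ) : LoopD L × ℂ :=
  (loopBr A.1 B.1, omegaL ℓ A.1 B.1)

/-- The extension of `∂_ε` to `𝔡[t,t⁻¹] ⊕ ℂc_ℓ` acting by zero on `c_ℓ`. -/
def extDeps (A : LoopD L × ℂ) : LoopD L × ℂ :=
  (depsLoop A.1, 0)

end LoopModel

noncomputable section TdModel

variable {L : Type} [LieRing L] [LieAlgebra ℂ L]

/-- The affine Kac–Moody algebra `𝔡̃_{ℓ,s} = ℂ∂ ⊕ 𝔡[t,t⁻¹] ⊕ ℂc` (first coordinate: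
coefficient of `∂`, last coordinate: coefficient of `c`). -/
abbrev TdD (L : Type) [LieRing L] [LieAlgebra ℂ L] := ℂ × LoopD L × ℂ

/-- The Lie bracket of `𝔡̃_{ℓ,s}`: `c` is central, `[∂,u] = ∂_s(u)` and
`[u,v] = [u,v]_loop + ω_ℓ(u,v)·c` for `u, v ∈ 𝔡[t,t⁻¹]`. -/
def tdBr (ℓ s : ℂ) (A B : TdD L) : TdD L :=
  (0, A.1 • dsLoop s B.2.1 - B.1 • dsLoop s A.2.1 + loopBr A.2.1 B.2.1,
    omegaL ℓ A.2.1 B.2.1)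

/-- The bilinear form `β_r` on `𝔡̃` determined by `β_r(a⊗tⁿ, b⊗tᵐ) = δ_{n+m,−1}·κ_r(a,b)`,
`β_r(c,∂) = β_r(∂,c) = 1`, `β_r(∂,∂) = β_r(c,c) = 0` and `β_r(𝔡[t,t⁻¹], ℂ∂⊕ℂc) = 0`. -/
def betaForm (r : ℂ) (A B : TdD L) : ℂ :=
  A.1 * B.2.2 + A.2.2 * B.1 + A.2.1.sum fun n a => kappaL r a (B.2.1 (-n - 1))

end TdModel

/-- `𝔡̃_{ℓ,s,<0} = t⁻¹𝔡[t⁻¹] ⊕ ℂc` as a subset of `𝔡̃_{ℓ,s}`. -/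
def tdNeg (L : Type) [LieRing L] [LieAlgebra ℂ L] : Set (TdD L) :=
  {A | A.1 = 0 ∧ ∀ n : ℤ, 0 ≤ n → A.2.1 n = 0}

/-- `𝔡̃_{ℓ,s,≥0} = ℂ∂ ⊕ 𝔡[t]` as a subset of `𝔡̃_{ℓ,s}`. -/
def tdPos (L : Type) [LieRing L] [LieAlgebra ℂ L] : Set (TdD L) :=
  {A | A.2.2 = 0 ∧ ∀ n : ℤ, n < 0 → A.2.1 n = 0}

section Helpers

variable {L : Type} [LieRing L] [LieAlgebra ℂ L]

lemma loopBr_apply (u v : LoopD L) (k : ℤ) :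
    loopBr u v k = u.sum fun n a => v.sum fun m b =>
      (Finsupp.single (n + m) ⁅a, b⁆ : LoopD L) k := by
  rw [loopBr, Finsupp.sum_apply]
  exact Finsupp.sum_congr fun n _ => Finsupp.sum_apply

lemma loopBr_neg (u v : LoopD L) (hu : ∀ n : ℤ, 0 ≤ n → u n = 0)
    (hv : ∀ n : ℤ, 0 ≤ n → v n = 0) (k : ℤ) (hk : 0 ≤ k) : loopBr u v k = 0 := by
  rw [loopBr_apply]
  refine Finset.sum_eq_zero fun n hn => Finset.sum_eq_zero fun m hm => ?_
  show (Finsupp.single (n + m) ⁅u n, v m⁆ : LoopD L) k = 0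
  rw [Finsupp.single_apply, if_neg]
  rintro rfl
  rcases le_or_gt 0 n with h | h
  · exact Finsupp.mem_support_iff.mp hn (hu n h)
  rcases le_or_gt 0 m with h' | h'
  · exact Finsupp.mem_support_iff.mp hm (hv m h')
  omega

lemma loopBr_pos (u v : LoopD L) (hu : ∀ n : ℤ, n < 0 → u n = 0)
    (hv : ∀ n : ℤ, n < 0 → v n = 0) (k : ℤ) (hk : k < 0) : loopBr u v k = 0 := by
  rw [loopBr_apply]
  refine Finset.sum_eq_zero fun n hn => Finset.sum_eq_zero fun m hm => ?_
  show (Finsupp.single (n + m) ⁅u n, v m⁆ : LoopD L) k = 0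
  rw [Finsupp.single_apply, if_neg]
  rintro rfl
  rcases lt_or_ge n 0 with h | h
  · exact Finsupp.mem_support_iff.mp hn (hu n h)
  rcases lt_or_ge m 0 with h' | h'
  · exact Finsupp.mem_support_iff.mp hm (hv m h')
  omega

lemma dtLoop_pos (u : LoopD L) (hu : ∀ n : ℤ, n < 0 → u n = 0)
    (k : ℤ) (hk : k < 0) : dtLoop u k = 0 := by
  rw [dtLoop, Finsupp.sum_apply]
  refine Finset.sum_eq_zero fun n hn => ?_
  show (Finsupp.single (n - 1) ((n : ℂ) • u n) : LoopD L) k = 0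
  rw [Finsupp.single_apply]
  split_ifs with h
  · rcases lt_or_ge n 0 with h' | h'
    · exact absurd (hu n h') (Finsupp.mem_support_iff.mp hn)
    · have : n = 0 := by omega
      simp [this]
  · rfl

lemma depsLoop_pos (u : LoopD L) (hu : ∀ n : ℤ, n < 0 → u n = 0)
    (k : ℤ) (hk : k < 0) : depsLoop u k = 0 := by
  rw [depsLoop, Finsupp.sum_apply]
  refine Finset.sum_eq_zero fun n hn => ?_
  show (Finsupp.single (n - 1) ((n : ℂ) • (((0 : L), killingForm ℂ L (u n).1) : L × Module.Dual ℂ L)) : LoopD L) k = 0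
  rw [Finsupp.single_apply]
  split_ifs with h
  · rcases lt_or_ge n 0 with h' | h'
    · exact absurd (hu n h') (Finsupp.mem_support_iff.mp hn)
    · have : n = 0 := by omega
      simp [this]
  · rfl

lemma dsLoop_pos (s : ℂ) (u : LoopD L) (hu : ∀ n : ℤ, n < 0 → u n = 0)
    (k : ℤ) (hk : k < 0) : dsLoop s u k = 0 := by
  rw [dsLoop]
  have h1 := dtLoop_pos u hu k hk
  have h2 := depsLoop_pos u hu k hk
  simp [h1, h2]

lemma omegaL_pos (ℓ : ℂ) (u v : LoopD L) (hu : ∀ n : ℤ, n < 0 → u n = 0)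
    (hv : ∀ n : ℤ, n < 0 → v n = 0) : omegaL ℓ u v = 0 := by
  rw [omegaL]
  refine Finset.sum_eq_zero fun n hn => ?_
  show (n : ℂ) * kappaL ℓ (u n) (v (-n)) = 0
  rcases lt_or_ge n 0 with h | h
  · exact absurd (hu n h) (Finsupp.mem_support_iff.mp hn)
  rcases lt_or_ge (-n) 0 with h' | h'
  · rw [hv (-n) h']
    simp [kappaL, kappa0]
  · have : n = 0 := by omega
    simp [this]

end Helpers

/-- For all `ℓ, s ∈ ℂ`, the subspaces `𝔡̃_{ℓ,s,<0} = t⁻¹𝔡[t⁻¹] ⊕ ℂc` and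
`𝔡̃_{ℓ,s,≥0} = ℂ∂ ⊕ 𝔡[t]` are complementary Lagrangian Lie subalgebras of
`(𝔡̃_{ℓ,s}, β_{ℓ−s})`. -/
theorem lagrangian_splitting (L : Type) [LieRing L] [LieAlgebra ℂ L]
    [FiniteDimensional ℂ L] (ℓ s : ℂ) :
    (∀ A B : TdD L, A ∈ tdNeg L → B ∈ tdNeg L → tdBr ℓ s A B ∈ tdNeg L) ∧
    (∀ A B : TdD L, A ∈ tdPos L → B ∈ tdPos L → tdBr ℓ s A B ∈ tdPos L) ∧
    (∀ A : TdD L, ∃! pq : tdNeg L × tdPos L, A = pq.1.1 + pq.2.1) ∧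
    (∀ A B : TdD L, A ∈ tdNeg L → B ∈ tdNeg L → betaForm (ℓ - s) A B = 0) ∧
    (∀ A B : TdD L, A ∈ tdPos L → B ∈ tdPos L → betaForm (ℓ - s) A B = 0) := by
  refine ⟨?_, ?_, ?_, ?_, ?_⟩
  · -- tdNeg closed under bracket
    rintro A B ⟨hA1, hA2⟩ ⟨hB1, hB2⟩
    refine ⟨rfl, fun n hn => ?_⟩
    show (A.1 • dsLoop s B.2.1 - B.1 • dsLoop s A.2.1 + loopBr A.2.1 B.2.1) n = 0
    rw [hA1, hB1]
    simp [loopBr_neg A.2.1 B.2.1 hA2 hB2 n hn]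
  · -- tdPos closed under bracket
    rintro A B ⟨hA1, hA2⟩ ⟨hB1, hB2⟩
    refine ⟨omegaL_pos ℓ A.2.1 B.2.1 hA2 hB2, fun n hn => ?_⟩
    show (A.1 • dsLoop s B.2.1 - B.1 • dsLoop s A.2.1 + loopBr A.2.1 B.2.1) n = 0
    simp [dsLoop_pos s B.2.1 hB2 n hn, dsLoop_pos s A.2.1 hA2 n hn,
      loopBr_pos A.2.1 B.2.1 hA2 hB2 n hn]
  · -- direct sum decomposition
    intro A
    refine ⟨⟨⟨(0, A.2.1.filter (fun n => n < 0), A.2.2), rfl, fun n hn => ?_⟩,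
      ⟨(A.1, A.2.1.filter (fun n => 0 ≤ n), 0), rfl, fun n hn => ?_⟩⟩, ?_, ?_⟩
    · simp only [Finsupp.filter_apply]
      rw [if_neg (by omega)]
    · simp only [Finsupp.filter_apply]
      rw [if_neg (by omega)]
    · refine Prod.ext (by simp) (Prod.ext ?_ (by simp))
      refine Finsupp.ext fun n => ?_
      show A.2.1 n = (A.2.1.filter (fun n => n < 0) + A.2.1.filter (fun n => 0 ≤ n)) n
      simp only [Finsupp.add_apply, Finsupp.filter_apply]
      rcases lt_or_ge n 0 with h | h
      · rw [if_pos h, if_neg (by omega), add_zero]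
      · rw [if_neg (by omega), if_pos h, zero_add]
    · rintro ⟨⟨p, hp1, hp2⟩, ⟨q, hq1, hq2⟩⟩ hsum
      have h1 : A.1 = p.1 + q.1 := congrArg Prod.fst hsum
      have h2 : A.2.1 = p.2.1 + q.2.1 := congrArg (fun x => x.2.1) hsum
      have h3 : A.2.2 = p.2.2 + q.2.2 := congrArg (fun x => x.2.2) hsum
      have hploop : p.2.1 = A.2.1.filter (fun n => n < 0) := by
        refine Finsupp.ext fun n => ?_
        rw [Finsupp.filter_apply]
        rcases lt_or_ge n 0 with h | h
        · rw [if_pos h, h2]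
          simp [hq2 n h]
        · rw [if_neg (by omega), hp2 n h]
      have hqloop : q.2.1 = A.2.1.filter (fun n => 0 ≤ n) := by
        refine Finsupp.ext fun n => ?_
        rw [Finsupp.filter_apply]
        rcases lt_or_ge n 0 with h | h
        · rw [if_neg (by omega), hq2 n h]
        · rw [if_pos h, h2]
          simp [hp2 n h]
      refine Prod.ext (Subtype.ext ?_) (Subtype.ext ?_)
      · refine Prod.ext hp1 (Prod.ext hploop ?_)
        show p.2.2 = A.2.2
        rw [h3, hq1, add_zero]
      · refine Prod.ext ?_ (Prod.ext hqloop ?_)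
        · show q.1 = A.1
          rw [h1, hp1, zero_add]
        · show q.2.2 = 0
          exact hq1
  · -- beta vanishes on tdNeg
    rintro A B ⟨hA1, hA2⟩ ⟨hB1, hB2⟩
    rw [betaForm, hA1, hB1, zero_mul, mul_zero, zero_add, zero_add]
    refine Finset.sum_eq_zero fun n hn => ?_
    show kappaL (ℓ - s) (A.2.1 n) (B.2.1 (-n - 1)) = 0
    rcases le_or_gt 0 n with h | h
    · exact absurd (hA2 n h) (Finsupp.mem_support_iff.mp hn)
    · rw [hB2 (-n - 1) (by omega)]
      simp [kappaL, kappa0]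
  · -- beta vanishes on tdPos
    rintro A B ⟨hA1, hA2⟩ ⟨hB1, hB2⟩
    rw [betaForm, hA1, hB1, zero_mul, mul_zero, zero_add, zero_add]
    refine Finset.sum_eq_zero fun n hn => ?_
    show kappaL (ℓ - s) (A.2.1 n) (B.2.1 (-n - 1)) = 0
    rcases lt_or_ge n 0 with h | h
    · exact absurd (hA2 n h) (Finsupp.mem_support_iff.mp hn)
    · rw [hB2 (-n - 1) (by omega)]
      simp [kappaL, kappa0]
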